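/- Let ε ∈ (0, 1] and let n be an integer with εn ≥ 16. Let P be a local property of sequences f : [n] → ℝ, and let f : [n] → ℝ be ε-far from P. Set ℓ = ⌊log_2(εn/4)⌋. Then Σ_{i=0}^{ℓ} |{(x, y) ∈ D_{2^i}(n) : f is unrepairable on {x, y} with respect to P}| ≥ (ε / (64 · log_2(εn))) · n · (ℓ + 1). Equivalently, if i is chosen uniformly at random from {0, …, ℓ} and then (x, y) is chosen uniformly at random from D_{2^i}(n), the probability that f is unrepairable on {x, y} with respect to P is at least ε / (64 · log_2(εn)). -/

import Mathlib

open scoped Classical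

/-- A sequence `f` (restricted to positions `1, …, n`) satisfies the local property
characterized by the family `F` of forbidden pairs. -/
def SatLocal (F : Set (ℝ × ℝ)) (n : ℕ) (f : ℕ → ℝ) : Prop :=
  ∀ i : ℕ, 1 ≤ i → i + 1 ≤ n → (f i, f (i + 1)) ∉ F

/-- `f` is unrepairable on `S` with respect to the local property characterized by
`F`: every sequence agreeing with `f` on `S` fails the property. -/
def Unrepairable (F : Set (ℝ × ℝ)) (n : ℕ) (f : ℕ → ℝ) (S : Set ℕ) : Prop :=
  ∀ f' : ℕ → ℝ, (∀ x ∈ S, f' x = f x) → ¬ SatLocal F n f'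

/-- The set `D_d(n)` of distance-`d` pairs:
`{(x, y) ∈ [n]² : y − x ≡ d (mod n)}`. -/
def Ddist (n d : ℕ) : Finset (ℕ × ℕ) :=
  ((Finset.Icc 1 n) ×ˢ (Finset.Icc 1 n)).filter
    (fun p => ((p.2 : ℤ) - (p.1 : ℤ)) % (n : ℤ) = (d : ℤ) % (n : ℤ))


namespace Stmt14

lemma rep_of_not_unrep {F : Set (ℝ × ℝ)} {n : ℕ} {f : ℕ → ℝ} {x y : ℕ}
    (h : ¬ Unrepairable F n f ({x, y} : Set ℕ)) :
    ∃ g : ℕ → ℝ, SatLocal F n g ∧ g x = f x ∧ g y = f y := by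
  unfold Unrepairable at h
  push_neg at h
  obtain ⟨g, hag, hsat⟩ := h
  exact ⟨g, hsat, hag x (by simp), hag y (by simp)⟩

lemma glue_sat {F : Set (ℝ × ℝ)} {n : ℕ} {g₁ g₂ : ℕ → ℝ} {b : ℕ}
    (h₁ : SatLocal F n g₁) (h₂ : SatLocal F n g₂) (hb : g₁ b = g₂ b) :
    SatLocal F n (fun i => if i ≤ b then g₁ i else g₂ i) := by
  intro i hi1 hi2
  rcases le_or_gt (i + 1) b with h | h
  · simpa [if_pos (le_of_lt (Nat.lt_of_lt_of_le (Nat.lt_succ_self i) h)), if_pos h,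
      Nat.le_of_succ_le h, (by omega : i < b)] using h₁ i hi1 hi2
  · rcases le_or_gt i b with h' | h'
    · have hib : i = b := le_antisymm h' (by omega)
      subst hib
      simpa [if_pos le_rfl, if_neg (by omega : ¬ i + 1 ≤ i), hb] using h₂ i hi1 hi2
    · simpa [if_neg (not_le.mpr h'), if_neg (by omega : ¬ i + 1 ≤ b), if_neg (by omega : ¬ i < b)] using h₂ i hi1 hi2

lemma mod_step {w r s : ℕ} (h1 : w % 2 ^ s = r % 2 ^ s)
    (h2 : w % 2 ^ (s + 1) ≠ r % 2 ^ (s + 1)) :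
    (w + 2 ^ s) % 2 ^ (s + 1) = r % 2 ^ (s + 1) := by
  have h1' : ((2 : ℤ) ^ s) ∣ (r : ℤ) - (w : ℤ) := by
    have := (Nat.modEq_iff_dvd (n := 2 ^ s) (a := w) (b := r)).mp h1
    simpa using this
  obtain ⟨k, hk⟩ := h1'
  rcases Int.even_or_odd k with ⟨t, ht⟩ | ⟨t, ht⟩
  · exfalso
    apply h2
    have hdvd : ((2 : ℤ) ^ (s + 1)) ∣ (r : ℤ) - (w : ℤ) := ⟨t, by rw [hk, ht]; ring⟩
    have := (Nat.modEq_iff_dvd (n := 2 ^ (s + 1)) (a := w) (b := r)).mpr (by simpa using hdvd)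
    exact this
  · have hdvd : ((2 : ℤ) ^ (s + 1)) ∣ (r : ℤ) - ((w : ℤ) + 2 ^ s) := by
      refine ⟨t, ?_⟩
      have : (r : ℤ) - ((w : ℤ) + 2 ^ s) = ((r : ℤ) - w) - 2 ^ s := by ring
      rw [this, hk, ht]; ring
    have := (Nat.modEq_iff_dvd (n := 2 ^ (s + 1)) (a := w + 2 ^ s) (b := r)).mpr
      (by push_cast; simpa using hdvd)
    exact this


lemma count_aligned {ℓ m a : ℕ} (hm : m ≤ ℓ) :
    ((Finset.range (2 ^ ℓ)).filter (fun r => a % 2 ^ m = r % 2 ^ m)).card = 2 ^ (ℓ - m) := by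
  have hpow : 2 ^ m * 2 ^ (ℓ - m) = 2 ^ ℓ := by
    rw [← pow_add]; congr 1; omega
  have hinj : Function.Injective (fun j : ℕ => a % 2 ^ m + j * 2 ^ m) := by
    intro j j' h
    simp only [] at h
    have : j * 2 ^ m = j' * 2 ^ m := by omega
    exact Nat.eq_of_mul_eq_mul_right (Nat.pow_pos (by norm_num)) this
  have himg : (Finset.range (2 ^ (ℓ - m))).image (fun j => a % 2 ^ m + j * 2 ^ m)
      = (Finset.range (2 ^ ℓ)).filter (fun r => a % 2 ^ m = r % 2 ^ m) := by
    ext r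
    simp only [Finset.mem_image, Finset.mem_filter, Finset.mem_range]
    constructor
    · rintro ⟨j, hj, rfl⟩
      have hmod : a % 2 ^ m < 2 ^ m := Nat.mod_lt _ (Nat.pow_pos (by norm_num))
      constructor
      · have h1 : (j + 1) * 2 ^ m ≤ 2 ^ (ℓ - m) * 2 ^ m :=
          Nat.mul_le_mul_right _ (by omega)
        have h2 : 2 ^ (ℓ - m) * 2 ^ m = 2 ^ ℓ := by rw [mul_comm]; exact hpow
        nlinarith
      · rw [Nat.add_mul_mod_self_right, Nat.mod_mod_of_dvd _ dvd_rfl]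
    · rintro ⟨hr, hmod⟩
      refine ⟨r / 2 ^ m, ?_, ?_⟩
      · have : r < 2 ^ (ℓ - m) * 2 ^ m := by rw [mul_comm, hpow]; exact hr
        exact Nat.div_lt_of_lt_mul (by omega)
      · have h3 := Nat.mod_add_div r (2 ^ m)
        rw [hmod, mul_comm]
        linarith
  rw [← himg, Finset.card_image_of_injective _ hinj, Finset.card_range]


noncomputable def badSet (F : Set (ℝ × ℝ)) (n : ℕ) (f : ℕ → ℝ) (ℓ : ℕ) : Finset (ℕ × ℕ) :=
  ((Finset.Icc 1 n) ×ˢ (Finset.range (ℓ + 1))).filter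
    (fun q => q.1 + 2 ^ q.2 ≤ n ∧ Unrepairable F n f ({q.1, q.1 + 2 ^ q.2} : Set ℕ))

def alignedQ (r : ℕ) (q : ℕ × ℕ) : Prop := q.1 % 2 ^ q.2 = r % 2 ^ q.2

def DeadP (F : Set (ℝ × ℝ)) (n : ℕ) (f : ℕ → ℝ) (ℓ r : ℕ) (x : ℕ) : Prop :=
  ∃ q ∈ badSet F n f ℓ, alignedQ r q ∧ q.1 + 1 ≤ x + 2 ^ q.2 ∧ x ≤ q.1 + 2 ^ (q.2 + 1)

noncomputable def Vv (ℓ r w : ℕ) : ℕ := Nat.findGreatest (fun s => w % 2 ^ s = r % 2 ^ s) ℓ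

lemma Vv_le (ℓ r w : ℕ) : Vv ℓ r w ≤ ℓ := Nat.findGreatest_le ℓ

lemma Vv_spec (ℓ r w : ℕ) : w % 2 ^ (Vv ℓ r w) = r % 2 ^ (Vv ℓ r w) :=
  Nat.findGreatest_spec (P := fun s => w % 2 ^ s = r % 2 ^ s) (Nat.zero_le ℓ)
    (by simp [Nat.mod_one])

lemma Vv_ge {ℓ r w s : ℕ} (hs : s ≤ ℓ) (h : w % 2 ^ s = r % 2 ^ s) : s ≤ Vv ℓ r w :=
  Nat.le_findGreatest hs h

lemma reach (F : Set (ℝ × ℝ)) (n : ℕ) (f : ℕ → ℝ) (ℓ r : ℕ) :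
    ∀ (k u w v : ℕ), 1 ≤ u → v ≤ n → v - u ≤ 2 ^ ℓ →
    ¬ DeadP F n f ℓ r u → ¬ DeadP F n f ℓ r v →
    u ≤ w → w < v →
    ((w - u < 2 ^ (Vv ℓ r w)) ∨ (v - w < 2 ^ (Vv ℓ r w + 1))) →
    v - w ≤ k →
    ∃ g : ℕ → ℝ, SatLocal F n g ∧ g w = f w ∧ g v = f v := by
  intro k
  induction k with
  | zero => intro u w v _ _ _ _ _ _ hwv _ hk; omega
  | succ k ih =>
    intro u w v hu hv hvu hDu hDv huw hwv hINV hk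
    set d := v - w with hd
    have hd0 : 0 < d := by omega
    set s := min (Vv ℓ r w) (Nat.log 2 d) with hs
    have hsV : s ≤ Vv ℓ r w := min_le_left _ _
    have hsL : s ≤ Nat.log 2 d := min_le_right _ _
    have hdℓ : d ≤ 2 ^ ℓ := by omega
    have hLgℓ : Nat.log 2 d ≤ ℓ := by
      calc Nat.log 2 d ≤ Nat.log 2 (2 ^ ℓ) := Nat.log_mono_right hdℓ
        _ = ℓ := Nat.log_pow (by norm_num : (1:ℕ) < 2) ℓ
    have hsℓ : s ≤ ℓ := le_trans hsL hLgℓ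
    have hpow_le : 2 ^ s ≤ d :=
      le_trans (Nat.pow_le_pow_right (by norm_num) hsL) (Nat.pow_log_le_self 2 (by omega))
    have hw'le : w + 2 ^ s ≤ v := by omega
    -- alignment of the step
    have halign : w % 2 ^ s = r % 2 ^ s := by
      have hdvd : (2 : ℕ) ^ s ∣ 2 ^ (Vv ℓ r w) := pow_dvd_pow 2 hsV
      exact (Nat.ModEq.of_dvd hdvd (Vv_spec ℓ r w : Nat.ModEq _ w r) : Nat.ModEq _ w r)
    have hdlt : d < 2 ^ (Nat.log 2 d + 1) := Nat.lt_pow_succ_log_self (by norm_num) d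
    -- the tag
    have htag : (w - u < 2 ^ s) ∨ (v - (w + 2 ^ s) < 2 ^ s) := by
      rcases hINV with hL | hR
      · by_cases hcase : w - u < 2 ^ s
        · exact Or.inl hcase
        · -- then s < Vv, so s = log
          have h1 : 2 ^ s ≤ w - u := by omega
          have h2 : s < Vv ℓ r w := by
            have h7 : 2 ^ s < 2 ^ (Vv ℓ r w) := lt_of_le_of_lt h1 hL
            exact (Nat.pow_lt_pow_iff_right (by norm_num)).mp h7
          have h3 : s = Nat.log 2 d := by omega
          right
          have : d < 2 ^ (s + 1) := by rw [h3]; exact hdlt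
          have hps : 2 ^ (s + 1) = 2 ^ s + 2 ^ s := by rw [pow_succ]; ring
          omega
      · -- right invariant forces s = log
        have h3 : s = Nat.log 2 d := by
          by_contra hc
          have h4 : s = Vv ℓ r w ∧ Vv ℓ r w < Nat.log 2 d := by omega
          have h5 : 2 ^ (Vv ℓ r w + 1) ≤ 2 ^ (Nat.log 2 d) :=
            Nat.pow_le_pow_right (by norm_num) (by omega)
          have h6 : 2 ^ (Nat.log 2 d) ≤ d := Nat.pow_log_le_self 2 (by omega)
          omega
        right
        have : d < 2 ^ (s + 1) := by rw [h3]; exact hdlt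
        have hps : 2 ^ (s + 1) = 2 ^ s + 2 ^ s := by rw [pow_succ]; ring
        omega
    -- the step edge is repairable
    have hgood : ¬ Unrepairable F n f ({w, w + 2 ^ s} : Set ℕ) := by
      intro hbad
      have hq : ((w, s) : ℕ × ℕ) ∈ badSet F n f ℓ := by
        unfold badSet
        simp only [Finset.mem_filter, Finset.mem_product, Finset.mem_Icc, Finset.mem_range]
        exact ⟨⟨⟨by omega, by omega⟩, by omega⟩, by omega, hbad⟩
      have hps : 2 ^ (s + 1) = 2 ^ s + 2 ^ s := by rw [pow_succ]; ring
      rcases htag with hL | hR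
      · exact hDu ⟨(w, s), hq, halign,
          by show w + 1 ≤ u + 2 ^ s; omega, by show u ≤ w + 2 ^ (s + 1); omega⟩
      · exact hDv ⟨(w, s), hq, halign,
          by show w + 1 ≤ v + 2 ^ s; omega, by show v ≤ w + 2 ^ (s + 1); omega⟩
    obtain ⟨g₁, hg₁sat, hg₁w, hg₁w'⟩ := rep_of_not_unrep hgood
    by_cases hwv' : w + 2 ^ s = v
    · exact ⟨g₁, hg₁sat, hg₁w, by rw [← hwv']; exact hg₁w'⟩
    · -- recursive step
      have hw'v : w + 2 ^ s < v := by omega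
      -- new invariant
      have hINV' : ((w + 2 ^ s) - u < 2 ^ (Vv ℓ r (w + 2 ^ s))) ∨
          (v - (w + 2 ^ s) < 2 ^ (Vv ℓ r (w + 2 ^ s) + 1)) := by
        by_cases hsl : s = Nat.log 2 d
        · -- right disjunct
          right
          have halign' : (w + 2 ^ s) % 2 ^ s = r % 2 ^ s := by
            rw [Nat.add_mod_right]; exact halign
          have hVge : s ≤ Vv ℓ r (w + 2 ^ s) := Vv_ge hsℓ halign'
          have h1 : v - (w + 2 ^ s) < 2 ^ s := by
            have : d < 2 ^ (s + 1) := by rw [hsl]; exact hdlt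
            have hps : 2 ^ (s + 1) = 2 ^ s + 2 ^ s := by rw [pow_succ]; ring
            omega
          have h2 : 2 ^ s ≤ 2 ^ (Vv ℓ r (w + 2 ^ s) + 1) :=
            Nat.pow_le_pow_right (by norm_num) (by omega)
          omega
        · -- left disjunct
          left
          have h4 : s = Vv ℓ r w ∧ Vv ℓ r w < Nat.log 2 d := by omega
          have hsℓ' : s + 1 ≤ ℓ := by omega
          -- invariant must have been the left one
          have hLeft : w - u < 2 ^ (Vv ℓ r w) := by
            rcases hINV with hL | hR
            · exact hL
            · exfalso
              have h5 : 2 ^ (Vv ℓ r w + 1) ≤ 2 ^ (Nat.log 2 d) :=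
                Nat.pow_le_pow_right (by norm_num) (by omega)
              have h6 : 2 ^ (Nat.log 2 d) ≤ d := Nat.pow_log_le_self 2 (by omega)
              omega
          have hne : w % 2 ^ (s + 1) ≠ r % 2 ^ (s + 1) := by
            intro hceq
            have : s + 1 ≤ Vv ℓ r w := Vv_ge hsℓ' hceq
            omega
          have halign' : (w + 2 ^ s) % 2 ^ (s + 1) = r % 2 ^ (s + 1) :=
            mod_step halign hne
          have hVge : s + 1 ≤ Vv ℓ r (w + 2 ^ s) := Vv_ge hsℓ' halign'
          have h7 : 2 ^ (s + 1) ≤ 2 ^ (Vv ℓ r (w + 2 ^ s)) :=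
            Nat.pow_le_pow_right (by norm_num) hVge
          have hps : 2 ^ (s + 1) = 2 ^ s + 2 ^ s := by rw [pow_succ]; ring
          have : w - u < 2 ^ s := by
            rw [h4.1]; exact hLeft
          omega
      obtain ⟨g₂, hg₂sat, hg₂w', hg₂v⟩ :=
        ih u (w + 2 ^ s) v hu hv hvu hDu hDv (by omega) hw'v hINV' (by omega)
      refine ⟨fun i => if i ≤ w + 2 ^ s then g₁ i else g₂ i,
        glue_sat hg₁sat hg₂sat (by rw [hg₁w', hg₂w']), ?_, ?_⟩
      · simp only [if_pos (by omega : w ≤ w + 2 ^ s)]; exact hg₁w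
      · simp only [if_neg (by omega : ¬ v ≤ w + 2 ^ s)]; exact hg₂v


lemma base_one (F : Set (ℝ × ℝ)) (n : ℕ) (f : ℕ → ℝ) (ℓ r : ℕ) (hn2 : 2 ≤ n)
    {w : ℕ} (hw1 : 1 ≤ w) (hwn : w ≤ n) (hD : ¬ DeadP F n f ℓ r w) :
    ∃ g : ℕ → ℝ, SatLocal F n g ∧ g w = f w := by
  by_cases hwe : w < n
  · have hgood : ¬ Unrepairable F n f ({w, w + 2 ^ 0} : Set ℕ) := by
      intro hbad
      have hq : ((w, 0) : ℕ × ℕ) ∈ badSet F n f ℓ := by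
        unfold badSet
        simp only [Finset.mem_filter, Finset.mem_product, Finset.mem_Icc, Finset.mem_range]
        exact ⟨⟨⟨hw1, hwn⟩, by omega⟩, by simpa using hwe, hbad⟩
      exact hD ⟨(w, 0), hq, by simp [alignedQ, Nat.mod_one],
        by show w + 1 ≤ w + 2 ^ 0; omega, by show w ≤ w + 2 ^ (0 + 1); omega⟩
    obtain ⟨g, hsat, hgw, _⟩ := rep_of_not_unrep hgood
    exact ⟨g, hsat, hgw⟩
  · have hwn' : w = n := by omega
    have hgood : ¬ Unrepairable F n f ({n - 1, (n - 1) + 2 ^ 0} : Set ℕ) := by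
      intro hbad
      have hq : ((n - 1, 0) : ℕ × ℕ) ∈ badSet F n f ℓ := by
        unfold badSet
        simp only [Finset.mem_filter, Finset.mem_product, Finset.mem_Icc, Finset.mem_range]
        exact ⟨⟨⟨by omega, by omega⟩, by omega⟩, by simp; omega, hbad⟩
      exact hD ⟨(n - 1, 0), hq, by simp [alignedQ, Nat.mod_one],
        by show (n - 1) + 1 ≤ w + 2 ^ 0; omega, by show w ≤ (n - 1) + 2 ^ (0 + 1); omega⟩
    obtain ⟨g, hsat, _, hgw⟩ := rep_of_not_unrep hgood
    refine ⟨g, hsat, ?_⟩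
    have : (n - 1) + 2 ^ 0 = w := by omega
    rwa [this] at hgw

lemma outer (F : Set (ℝ × ℝ)) (n : ℕ) (f : ℕ → ℝ) (ℓ r : ℕ) (hn2 : 2 ≤ n)
    (hgap : ((Finset.Icc 1 n).filter (DeadP F n f ℓ r)).card + 1 ≤ 2 ^ ℓ) :
    ∀ (k w : ℕ), 1 ≤ w → w ≤ n → ¬ DeadP F n f ℓ r w → n - w ≤ k →
    ∃ g : ℕ → ℝ, SatLocal F n g ∧
      ∀ x, 1 ≤ x → x ≤ n → ¬ DeadP F n f ℓ r x → w ≤ x → g x = f x := by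
  intro k
  induction k with
  | zero =>
    intro w hw1 hwn hD hk
    obtain ⟨g, hsat, hgw⟩ := base_one F n f ℓ r hn2 hw1 hwn hD
    exact ⟨g, hsat, fun x hx1 hxn hxD hwx => by
      have : x = w := by omega
      rw [this]; exact hgw⟩
  | succ k ih =>
    intro w hw1 hwn hD hk
    set T := (Finset.Icc 1 n).filter (fun x => ¬ DeadP F n f ℓ r x ∧ w < x) with hT
    rcases T.eq_empty_or_nonempty with hTe | hTne
    · obtain ⟨g, hsat, hgw⟩ := base_one F n f ℓ r hn2 hw1 hwn hD
      refine ⟨g, hsat, fun x hx1 hxn hxD hwx => ?_⟩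
      have : x = w := by
        by_contra hne
        have hxT : x ∈ T := by
          rw [hT]; simp only [Finset.mem_filter, Finset.mem_Icc]
          exact ⟨⟨hx1, hxn⟩, hxD, by omega⟩
        rw [hTe] at hxT
        exact absurd hxT (Finset.notMem_empty x)
      rw [this]; exact hgw
    · set w' := T.min' hTne with hw'
      have hw'T : w' ∈ T := T.min'_mem hTne
      have hw'mem : (1 ≤ w' ∧ w' ≤ n) ∧ ¬ DeadP F n f ℓ r w' ∧ w < w' := by
        have := hw'T
        rw [hT] at this
        simpa only [Finset.mem_filter, Finset.mem_Icc] using this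
      obtain ⟨⟨hw'1, hw'n⟩, hw'D, hww'⟩ := hw'mem
      have hgapP : ∀ x, w < x → x < w' → DeadP F n f ℓ r x := by
        intro x hx1 hx2
        by_contra hxD
        have hxT : x ∈ T := by
          rw [hT]; simp only [Finset.mem_filter, Finset.mem_Icc]
          exact ⟨⟨by omega, by omega⟩, hxD, hx1⟩
        have := T.min'_le x hxT
        omega
      have hIoo : Finset.Ioo w w' ⊆ (Finset.Icc 1 n).filter (DeadP F n f ℓ r) := by
        intro x hx
        simp only [Finset.mem_Ioo] at hx
        simp only [Finset.mem_filter, Finset.mem_Icc]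
        exact ⟨⟨by omega, by omega⟩, hgapP x hx.1 hx.2⟩
      have hcard : w' - w ≤ 2 ^ ℓ := by
        have h1 := Finset.card_le_card hIoo
        rw [Nat.card_Ioo] at h1
        omega
      obtain ⟨g₁, hg₁sat, hg₁w, hg₁w'⟩ :=
        reach F n f ℓ r (w' - w) w w w' hw1 hw'n hcard hD hw'D le_rfl hww'
          (Or.inl (by simpa using Nat.pos_pow_of_pos (Vv ℓ r w) (by norm_num))) le_rfl
      obtain ⟨g₂, hg₂sat, hg₂⟩ := ih w' hw'1 hw'n hw'D (by omega)
      refine ⟨fun i => if i ≤ w' then g₁ i else g₂ i,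
        glue_sat hg₁sat hg₂sat (by rw [hg₁w', hg₂ w' hw'1 hw'n hw'D le_rfl]), ?_⟩
      intro x hx1 hxn hxD hwx
      rcases le_or_gt x w' with hxw' | hxw'
      · have hx_or : x = w ∨ x = w' := by
          by_contra hne
          push_neg at hne
          exact hxD (hgapP x (by omega) (by omega))
        rcases hx_or with rfl | rfl
        · simp only [if_pos (le_of_lt hww')]; exact hg₁w
        · simp only [if_pos le_rfl]; exact hg₁w'
      · simp only [if_neg (not_le.mpr hxw')]
        exact hg₂ x hx1 hxn hxD (by omega)


lemma mem_badSet_snd_le {F : Set (ℝ × ℝ)} {n : ℕ} {f : ℕ → ℝ} {ℓ : ℕ} {q : ℕ × ℕ}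
    (hq : q ∈ badSet F n f ℓ) : q.2 ≤ ℓ := by
  unfold badSet at hq
  simp only [Finset.mem_filter, Finset.mem_product, Finset.mem_Icc, Finset.mem_range] at hq
  omega

lemma exists_offset (F : Set (ℝ × ℝ)) (n : ℕ) (f : ℕ → ℝ) (ℓ : ℕ) :
    ∃ r, r < 2 ^ ℓ ∧
      (∑ q ∈ (badSet F n f ℓ).filter (fun q => alignedQ r q), 2 ^ q.2) ≤
        (badSet F n f ℓ).card := by
  by_contra hc
  push_neg at hc
  have key : ∑ r ∈ Finset.range (2 ^ ℓ),
      (∑ q ∈ (badSet F n f ℓ).filter (fun q => alignedQ r q), 2 ^ q.2) =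
      (badSet F n f ℓ).card * 2 ^ ℓ := by
    have h1 : ∀ r, (∑ q ∈ (badSet F n f ℓ).filter (fun q => alignedQ r q), 2 ^ q.2) =
        ∑ q ∈ badSet F n f ℓ, if alignedQ r q then 2 ^ q.2 else 0 :=
      fun r => Finset.sum_filter _ _
    simp only [h1]
    rw [Finset.sum_comm]
    have h2 : ∀ q ∈ badSet F n f ℓ,
        (∑ r ∈ Finset.range (2 ^ ℓ), if alignedQ r q then 2 ^ q.2 else 0) = 2 ^ ℓ := by
      intro q hq
      rw [← Finset.sum_filter]
      rw [Finset.sum_const]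
      have e1 : ((Finset.range (2 ^ ℓ)).filter (fun r => alignedQ r q)) =
          ((Finset.range (2 ^ ℓ)).filter (fun r => q.1 % 2 ^ q.2 = r % 2 ^ q.2)) := by
        apply Finset.filter_congr
        intro x _
        simp [alignedQ]
      have hcount : ((Finset.range (2 ^ ℓ)).filter (fun r => alignedQ r q)).card
          = 2 ^ (ℓ - q.2) := by
        rw [e1]; exact count_aligned (mem_badSet_snd_le hq)
      rw [hcount, smul_eq_mul, ← pow_add]
      congr 1
      have := mem_badSet_snd_le hq
      omega
    rw [Finset.sum_congr rfl h2, Finset.sum_const, smul_eq_mul]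
  have hlow : ∀ r ∈ Finset.range (2 ^ ℓ), (badSet F n f ℓ).card + 1 ≤
      (∑ q ∈ (badSet F n f ℓ).filter (fun q => alignedQ r q), 2 ^ q.2) := by
    intro r hr
    have := hc r (Finset.mem_range.mp hr)
    omega
  have := Finset.sum_le_sum hlow
  rw [key, Finset.sum_const, Finset.card_range, smul_eq_mul] at this
  have hpos : 0 < 2 ^ ℓ := Nat.pow_pos (by norm_num)
  nlinarith

lemma dead_card (F : Set (ℝ × ℝ)) (n : ℕ) (f : ℕ → ℝ) (ℓ r : ℕ) :
    ((Finset.Icc 1 n).filter (DeadP F n f ℓ r)).card ≤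
      3 * ∑ q ∈ (badSet F n f ℓ).filter (fun q => alignedQ r q), 2 ^ q.2 := by
  have hsub : (Finset.Icc 1 n).filter (DeadP F n f ℓ r) ⊆
      ((badSet F n f ℓ).filter (fun q => alignedQ r q)).biUnion
        (fun q => Finset.Icc (q.1 + 1 - 2 ^ q.2) (q.1 + 2 ^ (q.2 + 1))) := by
    intro x hx
    simp only [Finset.mem_filter, Finset.mem_Icc] at hx
    obtain ⟨_, q, hq, hal, h1, h2⟩ := hx
    simp only [Finset.mem_biUnion, Finset.mem_filter, Finset.mem_Icc]
    exact ⟨q, ⟨hq, hal⟩, by omega, h2⟩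
  calc ((Finset.Icc 1 n).filter (DeadP F n f ℓ r)).card
      ≤ _ := Finset.card_le_card hsub
    _ ≤ ∑ q ∈ (badSet F n f ℓ).filter (fun q => alignedQ r q),
          (Finset.Icc (q.1 + 1 - 2 ^ q.2) (q.1 + 2 ^ (q.2 + 1))).card :=
        Finset.card_biUnion_le
    _ ≤ ∑ q ∈ (badSet F n f ℓ).filter (fun q => alignedQ r q), 3 * 2 ^ q.2 := by
        apply Finset.sum_le_sum
        intro q hq
        rw [Nat.card_Icc]
        have hp : 2 ^ (q.2 + 1) = 2 ^ q.2 + 2 ^ q.2 := by rw [pow_succ]; ring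
        omega
    _ = 3 * ∑ q ∈ (badSet F n f ℓ).filter (fun q => alignedQ r q), 2 ^ q.2 :=
        (Finset.mul_sum _ _ _).symm

lemma bad_le_sum (F : Set (ℝ × ℝ)) (n : ℕ) (f : ℕ → ℝ) (ℓ : ℕ) :
    (badSet F n f ℓ).card ≤
      ∑ i ∈ Finset.range (ℓ + 1),
        ((Ddist n (2 ^ i)).filter
          (fun p => Unrepairable F n f ({p.1, p.2} : Set ℕ))).card := by
  rw [Finset.card_eq_sum_card_fiberwise
    (f := Prod.snd) (t := Finset.range (ℓ + 1))
    (fun q hq => Finset.mem_range.mpr (Nat.lt_succ_of_le (mem_badSet_snd_le hq)))]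
  apply Finset.sum_le_sum
  intro i _
  apply Finset.card_le_card_of_injOn (fun q => (q.1, q.1 + 2 ^ q.2))
  · intro q hq
    simp only [Finset.mem_coe, Finset.mem_filter] at hq
    obtain ⟨hqb, hqi⟩ := hq
    unfold badSet at hqb
    simp only [Finset.mem_filter, Finset.mem_product, Finset.mem_Icc, Finset.mem_range] at hqb
    obtain ⟨⟨⟨hq1, hq2⟩, _⟩, hq3, hq4⟩ := hqb
    refine Finset.mem_filter.mpr ⟨Finset.mem_filter.mpr
      ⟨Finset.mem_product.mpr ⟨?_, ?_⟩, ?_⟩, ?_⟩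
    · exact Finset.mem_Icc.mpr ⟨hq1, hq2⟩
    · refine Finset.mem_Icc.mpr ⟨?_, ?_⟩
      · show 1 ≤ q.1 + 2 ^ q.2
        have hp : 1 ≤ 2 ^ q.2 := Nat.one_le_two_pow
        omega
      · show q.1 + 2 ^ q.2 ≤ n
        exact hq3
    · show (((q.1 + 2 ^ q.2 : ℕ) : ℤ) - ((q.1 : ℕ) : ℤ)) % (n : ℤ)
        = ((2 ^ i : ℕ) : ℤ) % (n : ℤ)
      rw [hqi]
      congr 1
      push_cast
      ring
    · show Unrepairable F n f ({q.1, q.1 + 2 ^ q.2} : Set ℕ)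
      exact hq4
  · intro q hq q' hq' heq
    simp only [Finset.mem_coe, Finset.mem_filter] at hq hq'
    simp only [Prod.mk.injEq] at heq
    have h2 : q.2 = q'.2 := hq.2.trans hq'.2.symm
    exact Prod.ext heq.1 h2


end Stmt14

open Stmt14 in
theorem stmt_14 (ε : ℝ) (n : ℕ) (hε : 0 < ε) (hε1 : ε ≤ 1) (hn : 16 ≤ ε * n)
    (F : Set (ℝ × ℝ)) (f : ℕ → ℝ)
    (hfar : ∀ f' : ℕ → ℝ, SatLocal F n f' →
      ε * n ≤ (((Finset.Icc 1 n).filter (fun x => f' x ≠ f x)).card : ℝ))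
    (ℓ : ℕ) (hℓ : ℓ = ⌊Real.logb 2 (ε * n / 4)⌋₊) :
    ε / (64 * Real.logb 2 (ε * n)) * n * (ℓ + 1) ≤
      ∑ i ∈ Finset.range (ℓ + 1),
        (((Ddist n (2 ^ i)).filter
          (fun p => Unrepairable F n f ({p.1, p.2} : Set ℕ))).card : ℝ) := by
  have hn_cast : (0:ℝ) ≤ (n:ℝ) := Nat.cast_nonneg n
  have hεn_le_n : ε * n ≤ (n:ℝ) := by nlinarith
  have hn16 : (16:ℝ) ≤ (n:ℝ) := le_trans hn hεn_le_n
  have hεn_pos : (0:ℝ) < ε * n := by linarith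
  have hn2 : 2 ≤ n := by exact_mod_cast (by linarith : (2:ℝ) ≤ (n:ℝ))
  -- logarithm facts
  have hlog4 : Real.logb 2 4 = 2 := by
    rw [show (4:ℝ) = 2 ^ (2:ℕ) by norm_num, Real.logb_pow]
    norm_num [Real.logb_self_eq_one]
  have hdiv : Real.logb 2 (ε * n / 4) = Real.logb 2 (ε * n) - 2 := by
    rw [Real.logb_div (ne_of_gt hεn_pos) (by norm_num), hlog4]
  have hfloor_le : (ℓ:ℝ) ≤ Real.logb 2 (ε * n) - 2 := by
    rw [hℓ, ← hdiv]
    exact Nat.floor_le (Real.logb_nonneg (by norm_num) (by linarith))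
  have hfloor_gt : Real.logb 2 (ε * n) - 2 < (ℓ:ℝ) + 1 := by
    rw [hℓ, ← hdiv]
    exact Nat.lt_floor_add_one _
  have key_le : ((2:ℝ)) ^ (ℓ + 2 : ℕ) ≤ ε * n := by
    rw [(Real.rpow_natCast 2 (ℓ + 2)).symm]
    calc (2:ℝ) ^ (((ℓ + 2 : ℕ)):ℝ) ≤ 2 ^ (Real.logb 2 (ε * n)) := by
          apply Real.rpow_le_rpow_of_exponent_le (by norm_num)
          push_cast
          linarith
      _ = ε * n := Real.rpow_logb (by norm_num) (by norm_num) hεn_pos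
  have key_gt : ε * n < ((2:ℝ)) ^ (ℓ + 3 : ℕ) := by
    rw [(Real.rpow_natCast 2 (ℓ + 3)).symm]
    calc ε * n = 2 ^ (Real.logb 2 (ε * n)) :=
          (Real.rpow_logb (by norm_num) (by norm_num) hεn_pos).symm
      _ < (2:ℝ) ^ (((ℓ + 3 : ℕ)):ℝ) := by
          apply Real.rpow_lt_rpow_of_exponent_lt (by norm_num)
          push_cast
          linarith
  have hp2 : ((2:ℝ)) ^ (ℓ + 2 : ℕ) = 4 * 2 ^ ℓ := by ring
  have hp3 : ((2:ℝ)) ^ (ℓ + 3 : ℕ) = 8 * 2 ^ ℓ := by ring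
  have h2l_le : (2:ℝ) ^ ℓ ≤ ε * n / 4 := by rw [hp2] at key_le; linarith
  have h2l_gt : ε * n / 8 < (2:ℝ) ^ ℓ := by rw [hp3] at key_gt; linarith
  -- the main counting bound
  have hB : ε * n / 24 ≤ ((badSet F n f ℓ).card : ℝ) := by
    by_contra hc
    push_neg at hc
    obtain ⟨r, hr2, hW⟩ := exists_offset F n f ℓ
    set D := (Finset.Icc 1 n).filter (DeadP F n f ℓ r) with hD
    have hDcard : D.card ≤ 3 * (badSet F n f ℓ).card :=
      le_trans (dead_card F n f ℓ r) (Nat.mul_le_mul_left 3 hW)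
    have hDreal : (D.card : ℝ) < ε * n / 8 := by
      have h1 : (D.card : ℝ) ≤ 3 * ((badSet F n f ℓ).card : ℝ) := by exact_mod_cast hDcard
      linarith
    have hgapn : D.card + 1 ≤ 2 ^ ℓ := by
      have h1 : (D.card : ℝ) < ((2 ^ ℓ : ℕ) : ℝ) := by push_cast; linarith
      have := Nat.cast_lt.mp h1
      omega
    have hAlive : ∃ x, 1 ≤ x ∧ x ≤ n ∧ ¬ DeadP F n f ℓ r x := by
      by_contra hall
      push_neg at hall
      have hsub : Finset.Icc 1 n ⊆ D := by
        intro x hx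
        have hx' := Finset.mem_Icc.mp hx
        exact Finset.mem_filter.mpr ⟨hx, hall x hx'.1 hx'.2⟩
      have h1 : n ≤ D.card := by
        have := Finset.card_le_card hsub
        rwa [Nat.card_Icc, Nat.add_sub_cancel] at this
      have h2 : (n:ℝ) ≤ (D.card : ℝ) := by exact_mod_cast h1
      linarith
    obtain ⟨x₀, hx₀1, hx₀n, hx₀D⟩ := hAlive
    set A := (Finset.Icc 1 n).filter (fun x => ¬ DeadP F n f ℓ r x) with hA
    have hAne : A.Nonempty :=
      ⟨x₀, Finset.mem_filter.mpr ⟨Finset.mem_Icc.mpr ⟨hx₀1, hx₀n⟩, hx₀D⟩⟩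
    set a₀ := A.min' hAne with ha₀
    have ha₀A : a₀ ∈ A := A.min'_mem hAne
    have ha₀mem : (1 ≤ a₀ ∧ a₀ ≤ n) ∧ ¬ DeadP F n f ℓ r a₀ := by
      have := ha₀A
      rw [hA] at this
      simpa only [Finset.mem_filter, Finset.mem_Icc] using this
    obtain ⟨g, hsat, hagree⟩ := outer F n f ℓ r hn2 hgapn (n - a₀) a₀
      ha₀mem.1.1 ha₀mem.1.2 ha₀mem.2 le_rfl
    have hsubset : (Finset.Icc 1 n).filter (fun x => g x ≠ f x) ⊆ D := by
      intro x hx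
      obtain ⟨hxI, hxne⟩ := Finset.mem_filter.mp hx
      by_cases hxD : DeadP F n f ℓ r x
      · exact Finset.mem_filter.mpr ⟨hxI, hxD⟩
      · exfalso
        have hx' := Finset.mem_Icc.mp hxI
        have hxA : x ∈ A := Finset.mem_filter.mpr ⟨hxI, hxD⟩
        have : a₀ ≤ x := A.min'_le x hxA
        exact hxne (hagree x hx'.1 hx'.2 hxD this)
    have hcard2 : (((Finset.Icc 1 n).filter (fun x => g x ≠ f x)).card : ℝ) ≤ (D.card : ℝ) := by
      exact_mod_cast Finset.card_le_card hsubset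
    have := hfar g hsat
    linarith
  -- final chain
  have hsum := bad_le_sum F n f ℓ
  have hSS : ((badSet F n f ℓ).card : ℝ) ≤
      ∑ i ∈ Finset.range (ℓ + 1),
        (((Ddist n (2 ^ i)).filter
          (fun p => Unrepairable F n f ({p.1, p.2} : Set ℕ))).card : ℝ) := by
    push_cast
    exact_mod_cast hsum
  have hLpos : 0 < Real.logb 2 (ε * n) := Real.logb_pos (by norm_num) (by linarith)
  have hℓL : (ℓ:ℝ) + 1 ≤ Real.logb 2 (ε * n) := by linarith
  have hX : (0:ℝ) ≤ ε / (64 * Real.logb 2 (ε * n)) * n := by positivity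
  calc ε / (64 * Real.logb 2 (ε * n)) * n * (ℓ + 1)
      ≤ ε / (64 * Real.logb 2 (ε * n)) * n * Real.logb 2 (ε * n) :=
        mul_le_mul_of_nonneg_left hℓL hX
    _ = ε * n / 64 := by
        field_simp
    _ ≤ ε * n / 24 := by linarith
    _ ≤ ((badSet F n f ℓ).card : ℝ) := hB
    _ ≤ _ := hSS
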